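/- For every integer n ≥ 1 and all parameters L > 0, q, H > 0, the map ρ ↦ Γ_n(ρ) is strictly convex on ℝ. -/

import Mathlib

open Real MeasureTheory

/-- Cable length increment `Γ_n(ρ)` for the `n`-th vibrating mode with amplitude `ρ`. -/
noncomputable def Gamma (L q H : ℝ) (n : ℕ) (ρ : ℝ) : ℝ :=
  (∫ x in (0:ℝ)..L,
      Real.sqrt (1 + ((q / H) * (x - L / 2) +
        ((n : ℝ) * π / L) * ρ * Real.cos ((n : ℝ) * π * x / L)) ^ 2))
    - ∫ x in (0:ℝ)..L, Real.sqrt (1 + (q / H) ^ 2 * (x - L / 2) ^ 2)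

noncomputable def Ppt (u : ℝ) : EuclideanSpace ℝ (Fin 2) := (WithLp.equiv 2 (Fin 2 → ℝ)).symm ![1, u]

lemma euclid_norm (u : ℝ) : ‖Ppt u‖ = Real.sqrt (1 + u ^ 2) := by
  rw [EuclideanSpace.norm_eq]
  simp [Ppt, Fin.sum_univ_two, sq_abs]

lemma key (u v a b : ℝ) (huv : u ≠ v) (ha : 0 < a) (hb : 0 < b) (hab : a + b = 1) :
    Real.sqrt (1 + (a * u + b * v) ^ 2) < a * Real.sqrt (1 + u ^ 2) + b * Real.sqrt (1 + v ^ 2) := by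
  have hray : ¬ SameRay ℝ (a • Ppt u) (b • Ppt v) := by
    intro h
    rcases h with h0 | h0 | ⟨r₁, r₂, hr₁, hr₂, heq⟩
    · have h1 : (a • Ppt u) 0 = 0 := by rw [h0]; rfl
      have : a * 1 = 0 := h1
      nlinarith
    · have h1 : (b • Ppt v) 0 = 0 := by rw [h0]; rfl
      have : b * 1 = 0 := h1
      nlinarith
    · have h0 : r₁ * (a * 1) = r₂ * (b * 1) := congrArg (fun w => w 0) heq
      have h1 : r₁ * (a * u) = r₂ * (b * v) := congrArg (fun w => w 1) heq
      apply huv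
      have hra : r₁ * a = r₂ * b := by simpa using h0
      have h1' : (r₁ * a) * u = (r₁ * a) * v := by
        calc (r₁ * a) * u = r₁ * (a * u) := by ring
          _ = r₂ * (b * v) := h1
          _ = (r₂ * b) * v := by ring
          _ = (r₁ * a) * v := by rw [hra]
      exact mul_left_cancel₀ (by positivity) h1'
  have hlt := norm_add_lt_of_not_sameRay hray
  have hsum : a • Ppt u + b • Ppt v = Ppt (a * u + b * v) := by
    ext i
    fin_cases i
    · show a * 1 + b * 1 = 1; linarith
    · rfl
  rw [hsum, euclid_norm, norm_smul, norm_smul, Real.norm_of_nonneg ha.le,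
    Real.norm_of_nonneg hb.le, euclid_norm, euclid_norm] at hlt
  exact hlt

noncomputable def gg (L q H : ℝ) (n : ℕ) (ρ x : ℝ) : ℝ :=
  Real.sqrt (1 + ((q / H) * (x - L / 2) +
    ((n : ℝ) * π / L) * ρ * Real.cos ((n : ℝ) * π * x / L)) ^ 2)

lemma gg_cont (L q H : ℝ) (n : ℕ) (ρ : ℝ) : Continuous (gg L q H n ρ) := by
  apply Real.continuous_sqrt.comp
  continuity

lemma integral_strict (L q H : ℝ) (hL : 0 < L) (hq : 0 < q) (hH : 0 < H) (n : ℕ) (hn : 1 ≤ n)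
    (ρ₁ ρ₂ a b : ℝ) (hne : ρ₁ ≠ ρ₂) (ha : 0 < a) (hb : 0 < b) (hab : a + b = 1) :
    (∫ x in (0:ℝ)..L, gg L q H n (a * ρ₁ + b * ρ₂) x) <
      a * (∫ x in (0:ℝ)..L, gg L q H n ρ₁ x) + b * ∫ x in (0:ℝ)..L, gg L q H n ρ₂ x := by
  have hπ := Real.pi_pos
  have hn' : (1:ℝ) ≤ n := by exact_mod_cast hn
  have hn0 : (0:ℝ) < n := by linarith
  have hCne : ((n : ℝ) * π / L) ≠ 0 := by positivity
  -- pointwise strict inequality where cosine is nonzero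
  have key2 : ∀ x : ℝ, Real.cos ((n : ℝ) * π * x / L) ≠ 0 →
      gg L q H n (a * ρ₁ + b * ρ₂) x < a * gg L q H n ρ₁ x + b * gg L q H n ρ₂ x := by
    intro x hc
    set c := Real.cos ((n : ℝ) * π * x / L) with hcdef
    set A := (q / H) * (x - L / 2) with hA
    have huv : A + ((n : ℝ) * π / L) * ρ₁ * c ≠ A + ((n : ℝ) * π / L) * ρ₂ * c := by
      intro hEq
      apply hne
      have h1 : (((n : ℝ) * π / L) * ρ₁) * c = (((n : ℝ) * π / L) * ρ₂) * c := by linarith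
      have h2 : ((n : ℝ) * π / L) * ρ₁ = ((n : ℝ) * π / L) * ρ₂ := mul_right_cancel₀ hc h1
      exact mul_left_cancel₀ hCne h2
    have hk := key _ _ a b huv ha hb hab
    have harg : A + ((n : ℝ) * π / L) * (a * ρ₁ + b * ρ₂) * c
        = a * (A + ((n : ℝ) * π / L) * ρ₁ * c) + b * (A + ((n : ℝ) * π / L) * ρ₂ * c) := by
      linear_combination (-A) * hab
    show Real.sqrt (1 + (A + ((n : ℝ) * π / L) * (a * ρ₁ + b * ρ₂) * c) ^ 2) <
      a * Real.sqrt (1 + (A + ((n : ℝ) * π / L) * ρ₁ * c) ^ 2) +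
      b * Real.sqrt (1 + (A + ((n : ℝ) * π / L) * ρ₂ * c) ^ 2)
    rw [harg]
    exact hk
  -- pointwise weak inequality
  have key1 : ∀ x : ℝ, gg L q H n (a * ρ₁ + b * ρ₂) x ≤ a * gg L q H n ρ₁ x + b * gg L q H n ρ₂ x := by
    intro x
    by_cases hc : Real.cos ((n : ℝ) * π * x / L) = 0
    · simp only [gg, hc, mul_zero, add_zero]
      have : a * Real.sqrt (1 + ((q / H) * (x - L / 2)) ^ 2)
          + b * Real.sqrt (1 + ((q / H) * (x - L / 2)) ^ 2)
          = (a + b) * Real.sqrt (1 + ((q / H) * (x - L / 2)) ^ 2) := by ring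
      rw [this, hab, one_mul]
    · exact (key2 x hc).le
  set h : ℝ → ℝ := fun x => a * gg L q H n ρ₁ x + b * gg L q H n ρ₂ x -
      gg L q H n (a * ρ₁ + b * ρ₂) x with hh
  have hhc : Continuous h := by
    apply Continuous.sub
    · exact ((continuous_const.mul (gg_cont L q H n ρ₁)).add
        (continuous_const.mul (gg_cont L q H n ρ₂)))
    · exact gg_cont L q H n _
  have hInt : ∀ ρ (s t : ℝ), IntervalIntegrable (gg L q H n ρ) volume s t :=
    fun ρ s t => (gg_cont L q H n ρ).intervalIntegrable s t
  have hc0 : (0:ℝ) < L / (2 * n) := by positivity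
  have hcL : L / (2 * n) ≤ L := by
    apply div_le_self hL.le
    linarith
  have hpos : ∀ x ∈ Set.Ioo (0:ℝ) (L / (2 * n)), 0 < h x := by
    intro x hx
    have hx1 : 0 < x := hx.1
    have hx2 : x < L / (2 * n) := hx.2
    have hθ1 : 0 < (n : ℝ) * π * x / L := by positivity
    have hθ2 : (n : ℝ) * π * x / L < π / 2 := by
      rw [div_lt_iff₀ hL]
      rw [lt_div_iff₀ (by positivity : (0:ℝ) < 2 * n)] at hx2
      nlinarith
    have hcos : 0 < Real.cos ((n : ℝ) * π * x / L) :=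
      Real.cos_pos_of_mem_Ioo ⟨by linarith, hθ2⟩
    have := key2 x hcos.ne'
    simp only [hh]
    linarith
  have hnonneg : ∀ x, 0 ≤ h x := by
    intro x
    simp only [hh]
    linarith [key1 x]
  have hsplit : (∫ x in (0:ℝ)..L, h x)
      = (∫ x in (0:ℝ)..(L / (2 * n)), h x) + ∫ x in (L / (2 * n))..L, h x :=
    (intervalIntegral.integral_add_adjacent_intervals (hhc.intervalIntegrable _ _)
      (hhc.intervalIntegrable _ _)).symm
  have h1 : 0 < ∫ x in (0:ℝ)..(L / (2 * n)), h x :=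
    intervalIntegral.intervalIntegral_pos_of_pos_on (hhc.intervalIntegrable _ _) hpos hc0
  have h2 : 0 ≤ ∫ x in (L / (2 * n))..L, h x :=
    intervalIntegral.integral_nonneg hcL fun x _ => hnonneg x
  have hItot : 0 < ∫ x in (0:ℝ)..L, h x := by rw [hsplit]; linarith
  have hFeq : (∫ x in (0:ℝ)..L, h x)
      = a * (∫ x in (0:ℝ)..L, gg L q H n ρ₁ x) + b * (∫ x in (0:ℝ)..L, gg L q H n ρ₂ x)
        - ∫ x in (0:ℝ)..L, gg L q H n (a * ρ₁ + b * ρ₂) x := by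
    simp only [hh]
    rw [intervalIntegral.integral_sub (((hInt ρ₁ 0 L).const_mul a).add
        ((hInt ρ₂ 0 L).const_mul b)) (hInt _ 0 L),
      intervalIntegral.integral_add ((hInt ρ₁ 0 L).const_mul a) ((hInt ρ₂ 0 L).const_mul b),
      intervalIntegral.integral_const_mul, intervalIntegral.integral_const_mul]
  rw [hFeq] at hItot
  linarith

/-- The map `ρ ↦ Γ_n(ρ)` is strictly convex on `ℝ`. -/
theorem Gamma_strictConvex (L q H : ℝ) (hL : 0 < L) (hq : 0 < q) (hH : 0 < H)
    (n : ℕ) (hn : 1 ≤ n) :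
    StrictConvexOn ℝ Set.univ (fun ρ : ℝ => Gamma L q H n ρ) := by
  constructor
  · exact convex_univ
  intro ρ₁ _ ρ₂ _ hne a b ha hb hab
  have hGamma : ∀ ρ, Gamma L q H n ρ = (∫ x in (0:ℝ)..L, gg L q H n ρ x)
      - ∫ x in (0:ℝ)..L, Real.sqrt (1 + (q / H) ^ 2 * (x - L / 2) ^ 2) := fun ρ => rfl
  simp only [smul_eq_mul, hGamma]
  have hlt := integral_strict L q H hL hq hH n hn ρ₁ ρ₂ a b hne ha hb hab
  set C := ∫ x in (0:ℝ)..L, Real.sqrt (1 + (q / H) ^ 2 * (x - L / 2) ^ 2)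
  have : a * ((∫ x in (0:ℝ)..L, gg L q H n ρ₁ x) - C)
      + b * ((∫ x in (0:ℝ)..L, gg L q H n ρ₂ x) - C)
      = a * (∫ x in (0:ℝ)..L, gg L q H n ρ₁ x) + b * (∫ x in (0:ℝ)..L, gg L q H n ρ₂ x)
        - (a + b) * C := by ring
  rw [this, hab, one_mul]
  linarith
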